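/- For every natural number n, the torus board (5+2n)′×4′ does not admit a fault-free domino tiling. -/
import Mathlib

/-- Adjacency on the torus board `a′ × b′`: cells `(i,j)` and `(i+1,j)` with
addition in `ZMod a` (vertical neighbors, wrapping around) or `(i,j)` and
`(i,j+1)` with addition in `ZMod b` (horizontal neighbors, wrapping around). -/
def torAdj (a b : ℕ) (c d : ZMod a × ZMod b) : Prop :=
  (c.2 = d.2 ∧ (d.1 = c.1 + 1 ∨ c.1 = d.1 + 1)) ∨
  (c.1 = d.1 ∧ (d.2 = c.2 + 1 ∨ c.2 = d.2 + 1))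

/-- A tiling of the torus board: a set of dominoes (unordered pairs of adjacent
cells) such that every cell belongs to exactly one domino. -/
def torIsTiling (a b : ℕ) (T : Set (Sym2 (ZMod a × ZMod b))) : Prop :=
  (∀ p ∈ T, ∃ c d, torAdj a b c d ∧ p = s(c, d)) ∧
  (∀ x : ZMod a × ZMod b, ∃! p, p ∈ T ∧ x ∈ p)

/-- A tiling of the torus board is fault-free if every horizontal fault-line
(between rows `i` and `i+1`, for `i : ZMod a`) and every vertical fault-line
(between columns `j` and `j+1`, for `j : ZMod b`) is crossed by some domino. -/
def torFaultFree (a b : ℕ) (T : Set (Sym2 (ZMod a × ZMod b))) : Prop :=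
  (∀ i : ZMod a, ∃ j : ZMod b, s((i, j), (i + 1, j)) ∈ T) ∧
  (∀ j : ZMod b, ∃ i : ZMod a, s((i, j), (i, j + 1)) ∈ T)

/-- The torus board `a′ × b′` admits a fault-free domino tiling. -/
def torFaultFreeTileable (a b : ℕ) : Prop :=
  ∃ T : Set (Sym2 (ZMod a × ZMod b)), torIsTiling a b T ∧ torFaultFree a b T

/- ### Auxiliary machinery -/

/-- Number of `true` values of a function `ZMod 4 → Bool`. -/
def torCnt (s : ZMod 4 → Bool) : ℕ :=
  (cond (s 0) 1 0) + (cond (s 1) 1 0) + (cond (s 2) 1 0) + (cond (s 3) 1 0)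

/-- Parity invariant of a cut: parity of the sum of occupied columns,
twisted by whether three columns are occupied. -/
def torG (s : ZMod 4 → Bool) : Bool :=
  (xor (s 1) (s 3)).xor (decide (torCnt s = 3))

/-- The local constraint coming from one row of the torus: each of the four
cells of the row is covered by exactly one of: a vertical domino from above,
a vertical domino going below, or a horizontal domino to its left or right. -/
abbrev torRowC (s s' h : ZMod 4 → Bool) : Prop :=
  ∀ j : ZMod 4,
    (cond (s j) 1 0) + (cond (s' j) 1 0) + (cond (h (j-1)) 1 0) + (cond (h j) 1 0) = 1

theorem torStep_par : ∀ s s' h : ZMod 4 → Bool, torRowC s s' h →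
    torCnt s % 2 = torCnt s' % 2 := by decide

theorem torStep_odd : ∀ s s' h : ZMod 4 → Bool, torRowC s s' h →
    torCnt s % 2 = 1 → torCnt s' % 2 = 1 → torG s' = !torG s := by decide

theorem torStep_even : ∀ s s' h : ZMod 4 → Bool, torRowC s s' h →
    torCnt s % 2 = 0 → torCnt s' % 2 = 0 → (∃ j, s j = true) → (∃ j, s' j = true) →
    ∀ j, h j = false := by decide

open Classical in
/-- Boolean: does a vertical domino cross the cut below row `i` in column `j`? -/
noncomputable def torVB (a : ℕ) (T : Set (Sym2 (ZMod a × ZMod 4)))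
    (i : ZMod a) (j : ZMod 4) : Bool :=
  decide (s((i, j), (i + 1, j)) ∈ T)

open Classical in
/-- Boolean: does a horizontal domino in row `i` cross the cut right of column `j`? -/
noncomputable def torHB (a : ℕ) (T : Set (Sym2 (ZMod a × ZMod 4)))
    (i : ZMod a) (j : ZMod 4) : Bool :=
  decide (s((i, j), (i, j + 1)) ∈ T)

theorem torRow (a : ℕ) (ha1 : (1 : ZMod a) ≠ 0) (ha2 : (2 : ZMod a) ≠ 0)
    (T : Set (Sym2 (ZMod a × ZMod 4))) (ht : torIsTiling a 4 T) (r : ZMod a) :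
    torRowC (torVB a T (r - 1)) (torVB a T r) (torHB a T r) := by
  classical
  intro j
  have huv : ∀ p q : Sym2 (ZMod a × ZMod 4), p ∈ T → (r, j) ∈ p → q ∈ T → (r, j) ∈ q →
      p = q := fun p q hp hxp hq hxq => (ht.2 (r, j)).unique ⟨hp, hxp⟩ ⟨hq, hxq⟩
  set P1 : Prop := s(((r : ZMod a) - 1, j), (r, j)) ∈ T with hP1d
  set P2 : Prop := s(((r : ZMod a), j), (r + 1, j)) ∈ T with hP2d
  set P3 : Prop := s(((r : ZMod a), j - 1), (r, j)) ∈ T with hP3d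
  set P4 : Prop := s(((r : ZMod a), j), (r, j + 1)) ∈ T with hP4d
  have hz1 : ∀ u : ZMod 4, ¬(u = u + 1) := by decide
  have hz2 : ∀ u : ZMod 4, ¬(u - 1 = u) := by decide
  have hz3 : ∀ u : ZMod 4, ¬(u - 1 = u + 1) := by decide
  -- at least one of the four possibilities holds
  have hone : P1 ∨ P2 ∨ P3 ∨ P4 := by
    obtain ⟨p, ⟨hpT, hxp⟩, -⟩ := ht.2 (r, j)
    obtain ⟨c, d, hadj, rfl⟩ := ht.1 p hpT
    rw [Sym2.mem_iff] at hxp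
    rcases hxp with h | h
    · obtain ⟨d1, d2⟩ := d
      subst h
      rcases hadj with ⟨h2, h1 | h1⟩ | ⟨h2, h1 | h1⟩
      · simp only at h1 h2
        subst h2; subst h1
        exact Or.inr (Or.inl hpT)
      · simp only at h1 h2
        have hd : d1 = r - 1 := by rw [h1]; ring
        subst h2; rw [hd, Sym2.eq_swap] at hpT
        exact Or.inl hpT
      · simp only at h1 h2
        subst h2; subst h1
        exact Or.inr (Or.inr (Or.inr hpT))
      · simp only at h1 h2
        have hd : d2 = j - 1 := by rw [h1]; ring
        subst h2; rw [hd, Sym2.eq_swap] at hpT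
        exact Or.inr (Or.inr (Or.inl hpT))
    · obtain ⟨c1, c2⟩ := c
      subst h
      rcases hadj with ⟨h2, h1 | h1⟩ | ⟨h2, h1 | h1⟩
      · simp only at h1 h2
        have hc : c1 = r - 1 := by rw [h1]; ring
        subst h2; rw [hc] at hpT
        exact Or.inl hpT
      · simp only at h1 h2
        subst h2; subst h1; rw [Sym2.eq_swap] at hpT
        exact Or.inr (Or.inl hpT)
      · simp only at h1 h2
        have hc : c2 = j - 1 := by rw [h1]; ring
        subst h2; rw [hc] at hpT
        exact Or.inr (Or.inr (Or.inl hpT))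
      · simp only at h1 h2
        subst h2; subst h1; rw [Sym2.eq_swap] at hpT
        exact Or.inr (Or.inr (Or.inr hpT))
  -- pairwise exclusions
  have hP12 : ¬(P1 ∧ P2) := by
    rintro ⟨h1, h2⟩
    have h := huv _ _ h1 (by simp) h2 (by simp)
    simp only [Sym2.eq_iff, Prod.mk.injEq] at h
    rcases h with ⟨⟨h, -⟩, -⟩ | ⟨⟨h, -⟩, -⟩
    · exact ha1 (by linear_combination -h)
    · exact ha2 (by linear_combination -h)
  have hP13 : ¬(P1 ∧ P3) := by
    rintro ⟨h1, h2⟩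
    have h := huv _ _ h1 (by simp) h2 (by simp)
    simp only [Sym2.eq_iff, Prod.mk.injEq] at h
    rcases h with ⟨⟨h, -⟩, -⟩ | ⟨⟨h, -⟩, -⟩
    · exact ha1 (by linear_combination -h)
    · exact ha1 (by linear_combination -h)
  have hP14 : ¬(P1 ∧ P4) := by
    rintro ⟨h1, h2⟩
    have h := huv _ _ h1 (by simp) h2 (by simp)
    simp only [Sym2.eq_iff, Prod.mk.injEq] at h
    rcases h with ⟨⟨h, -⟩, -⟩ | ⟨⟨h, -⟩, -⟩
    · exact ha1 (by linear_combination -h)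
    · exact ha1 (by linear_combination -h)
  have hP23 : ¬(P2 ∧ P3) := by
    rintro ⟨h1, h2⟩
    have h := huv _ _ h1 (by simp) h2 (by simp)
    simp only [Sym2.eq_iff, Prod.mk.injEq] at h
    rcases h with ⟨-, ⟨h, -⟩⟩ | ⟨-, ⟨h, -⟩⟩
    · exact ha1 (by linear_combination h)
    · exact ha1 (by linear_combination h)
  have hP24 : ¬(P2 ∧ P4) := by
    rintro ⟨h1, h2⟩
    have h := huv _ _ h1 (by simp) h2 (by simp)
    rcases (Sym2.eq_iff.mp h) with ⟨-, h'⟩ | ⟨h', -⟩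
    · have : (r : ZMod a) + 1 = r := congrArg Prod.fst h'
      exact ha1 (by linear_combination this)
    · have : (j : ZMod 4) = j + 1 := congrArg Prod.snd h'
      exact hz1 j this
  have hP34 : ¬(P3 ∧ P4) := by
    rintro ⟨h1, h2⟩
    have h := huv _ _ h1 (by simp) h2 (by simp)
    rcases (Sym2.eq_iff.mp h) with ⟨h', -⟩ | ⟨h', -⟩
    · exact hz2 j (congrArg Prod.snd h')
    · exact hz3 j (congrArg Prod.snd h')
  -- now compute the sum
  have e1 : (r : ZMod a) - 1 + 1 = r := by ring
  have e2 : (j : ZMod 4) - 1 + 1 = j := by ring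
  simp only [torVB, torHB, e1, e2, ← hP1d, ← hP2d, ← hP3d, ← hP4d]
  rcases hone with h | h | h | h
  · rw [decide_eq_true h, decide_eq_false (fun h2 => hP12 ⟨h, h2⟩),
      decide_eq_false (fun h2 => hP13 ⟨h, h2⟩), decide_eq_false (fun h2 => hP14 ⟨h, h2⟩)]
    rfl
  · rw [decide_eq_false (fun h2 => hP12 ⟨h2, h⟩), decide_eq_true h,
      decide_eq_false (fun h2 => hP23 ⟨h, h2⟩), decide_eq_false (fun h2 => hP24 ⟨h, h2⟩)]
    rfl
  · rw [decide_eq_false (fun h2 => hP13 ⟨h2, h⟩), decide_eq_false (fun h2 => hP23 ⟨h2, h⟩),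
      decide_eq_true h, decide_eq_false (fun h2 => hP34 ⟨h, h2⟩)]
    rfl
  · rw [decide_eq_false (fun h2 => hP14 ⟨h2, h⟩), decide_eq_false (fun h2 => hP24 ⟨h2, h⟩),
      decide_eq_false (fun h2 => hP34 ⟨h2, h⟩), decide_eq_true h]
    rfl

/-- For every natural number `n`, the torus board `(5+2n)′ × 4′` does not admit
a fault-free domino tiling. -/
theorem tor_not_faultFree_52n'4' :
    ∀ n : ℕ, ¬ torFaultFreeTileable (5 + 2 * n) 4 := by
  intro n hT
  classical
  obtain ⟨T, ht, hff⟩ := hT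
  haveI : NeZero (5 + 2 * n) := ⟨by omega⟩
  have ha1 : (1 : ZMod (5 + 2 * n)) ≠ 0 := by
    intro h
    have h' : ((1 : ℕ) : ZMod (5 + 2 * n)) = 0 := by exact_mod_cast h
    rw [ZMod.natCast_eq_zero_iff] at h'
    have := Nat.le_of_dvd one_pos h'
    omega
  have ha2 : (2 : ZMod (5 + 2 * n)) ≠ 0 := by
    intro h
    have h' : ((2 : ℕ) : ZMod (5 + 2 * n)) = 0 := by exact_mod_cast h
    rw [ZMod.natCast_eq_zero_iff] at h'
    have := Nat.le_of_dvd (by norm_num) h'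
    omega
  have hrow := torRow (5 + 2 * n) ha1 ha2 T ht
  -- the parity of the number of vertical dominoes crossing a cut is constant
  set pf : ZMod (5 + 2 * n) → Bool :=
    fun i => decide (torCnt (torVB (5 + 2 * n) T i) % 2 = 1) with hpf
  have hpstep : ∀ r : ZMod (5 + 2 * n), pf r = pf (r - 1) := by
    intro r
    have := torStep_par _ _ _ (hrow r)
    simp only [hpf, this]
  have hpstep' : ∀ r : ZMod (5 + 2 * n), pf (r + 1) = pf r := by
    intro r
    have := hpstep (r + 1)
    rwa [add_sub_cancel_right] at this
  have hpconst : ∀ i : ZMod (5 + 2 * n), pf i = pf 0 := by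
    have key : ∀ k : ℕ, pf ((k : ZMod (5 + 2 * n))) = pf 0 := by
      intro k
      induction k with
      | zero => simp
      | succ m ih =>
        have : ((m + 1 : ℕ) : ZMod (5 + 2 * n)) = (m : ZMod (5 + 2 * n)) + 1 := by
          push_cast; ring
        rw [this, hpstep', ih]
    intro i
    have := key i.val
    rwa [ZMod.natCast_rightInverse i] at this
  -- nonemptiness of each cut from fault-freeness
  have hne : ∀ i : ZMod (5 + 2 * n), ∃ j, torVB (5 + 2 * n) T i j = true := by
    intro i
    obtain ⟨j, hj⟩ := hff.1 i
    exact ⟨j, by simp [torVB, hj]⟩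
  rcases hb : pf 0 with _ | _
  · -- even case: no horizontal dominoes at all
    have hev : ∀ i : ZMod (5 + 2 * n), torCnt (torVB (5 + 2 * n) T i) % 2 = 0 := by
      intro i
      have := (hpconst i).trans hb
      simp only [hpf, decide_eq_false_iff_not] at this
      omega
    have hnoh : ∀ (r : ZMod (5 + 2 * n)) (j : ZMod 4), torHB (5 + 2 * n) T r j = false :=
      fun r => torStep_even _ _ _ (hrow r) (hev (r - 1)) (hev r) (hne (r - 1)) (hne r)
    obtain ⟨i, hi⟩ := hff.2 0
    have h0 := hnoh i 0
    simp only [torHB] at h0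
    rw [decide_eq_false_iff_not] at h0
    exact h0 hi
  · -- odd case: the invariant flips at each cut, contradiction with odd length
    have hodd : ∀ i : ZMod (5 + 2 * n), torCnt (torVB (5 + 2 * n) T i) % 2 = 1 := by
      intro i
      have := (hpconst i).trans hb
      simpa only [hpf, decide_eq_true_eq] using this
    set gf : ZMod (5 + 2 * n) → Bool := fun i => torG (torVB (5 + 2 * n) T i) with hgf
    have hgstep : ∀ r : ZMod (5 + 2 * n), gf (r + 1) = !gf r := by
      intro r
      have := torStep_odd _ _ _ (hrow (r + 1)) (by rw [add_sub_cancel_right]; exact hodd r)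
        (hodd (r + 1))
      rwa [add_sub_cancel_right] at this
    have key : ∀ k : ℕ, gf ((k : ZMod (5 + 2 * n))) = xor (decide (k % 2 = 1)) (gf 0) := by
      intro k
      induction k with
      | zero => simp
      | succ m ih =>
        have e : ((m + 1 : ℕ) : ZMod (5 + 2 * n)) = (m : ZMod (5 + 2 * n)) + 1 := by
          push_cast; ring
        rw [e, hgstep, ih]
        rcases Nat.even_or_odd m with hm | hm
        · have h1 : m % 2 = 0 := Nat.even_iff.mp hm
          have h2 : (m + 1) % 2 = 1 := by omega
          simp [h1, h2]
        · have h1 : m % 2 = 1 := Nat.odd_iff.mp hm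
          have h2 : (m + 1) % 2 = 0 := by omega
          simp [h1, h2]
    have hfin := key (5 + 2 * n)
    rw [ZMod.natCast_self] at hfin
    have hmod : (5 + 2 * n) % 2 = 1 := by omega
    rw [hmod] at hfin
    simp at hfin
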